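/- Suppose (V_k)_{k=0}^{n−1} is a sequence of random variables with each V_k ℱ_k-measurable such that: V_{n−1} is an essential infimum of { E^Q[M | ℱ_{n−1}] : M ℱ_n-measurable, Q-integrable, l(M−S_n) P-integrable, E^P[ l(M − S_n) | ℱ_{n−1} ] ≤ α_n a.s. }; and for every k ∈ {1,…,n−1}, V_{k−1} is an essential infimum of { E^Q[M | ℱ_{k−1}] : M ℱ_k-measurable, Q-integrable, M ≥ V_k a.s., l(M−S_k) P-integrable, E^P[ l(M − S_k) | ℱ_{k−1} ] ≤ α_k a.s. }. Then for every k ∈ {0,…,n−1}, V_k is an essential infimum of the set { M_k : (M_t)_{t=k}^n ∈ ℳ_{TC,k} }. -/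

import Mathlib

open MeasureTheory Filter
open scoped MeasureTheory

/-- A supermartingale (under measure `μ`) on the discrete time interval `{a,…,b}`. -/
def IsSupermartingaleOn {Ω : Type*} {m0 : MeasurableSpace Ω}
    (𝓕 : MeasureTheory.Filtration ℕ m0) (μ : Measure Ω)
    (M : ℕ → Ω → ℝ) (a b : ℕ) : Prop :=
  (∀ k, a ≤ k → k ≤ b → StronglyMeasurable[𝓕 k] (M k)) ∧
  (∀ k, a ≤ k → k ≤ b → Integrable (M k) μ) ∧
  (∀ k, a ≤ k → k < b → (μ[M (k + 1)|𝓕 k]) ≤ᵐ[μ] M k)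

/-- Membership in `ℳ_{TC,k}`: a `Q`-supermartingale `(M_t)_{t=k}^n` with
`l(M_t - S_t)` `P`-integrable and `E^P[l(M_t - S_t)|F_{t-1}] ≤ α_t` a.s. for every
`t ∈ {k+1,…,n}`. -/
def MemTC {Ω : Type*} {m0 : MeasurableSpace Ω}
    (𝓕 : MeasureTheory.Filtration ℕ m0) (P Q : Measure Ω)
    (S : ℕ → Ω → ℝ) (l : ℝ → ℝ) (α : ℕ → ℝ) (k n : ℕ)
    (M : ℕ → Ω → ℝ) : Prop :=
  IsSupermartingaleOn 𝓕 Q M k n ∧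
  ∀ t, k + 1 ≤ t → t ≤ n →
    Integrable (fun ω => l (M t ω - S t ω)) P ∧
    (P[fun ω => l (M t ω - S t ω)|𝓕 (t - 1)]) ≤ᵐ[P] fun _ => α t

/-- `W` is an essential infimum (under `μ`) of the family `A` of random variables. -/
def IsEssInf {Ω : Type*} {m0 : MeasurableSpace Ω} (μ : Measure Ω)
    (A : Set (Ω → ℝ)) (W : Ω → ℝ) : Prop :=
  (∀ M ∈ A, W ≤ᵐ[μ] M) ∧ ∀ W' : Ω → ℝ, (∀ M ∈ A, W' ≤ᵐ[μ] M) → W' ≤ᵐ[μ] W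

section Helpers
set_option linter.unusedSectionVars false

variable {Ω : Type*} {m0 : MeasurableSpace Ω} {P Q : Measure Ω}
  [IsProbabilityMeasure P] [IsProbabilityMeasure Q]
  {𝓕 : Filtration ℕ m0} {S : ℕ → Ω → ℝ} {l : ℝ → ℝ} {α : ℕ → ℝ}

lemma isEssInf_nonempty {A : Set (Ω → ℝ)} {W : Ω → ℝ}
    (h : IsEssInf P A W) : A.Nonempty := by
  by_contra hA
  rw [Set.not_nonempty_iff_eq_empty] at hA
  subst hA
  have h2 := h.2 (fun ω => W ω + 1) (fun M hM => absurd hM (by simp))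
  haveI : NeBot (ae P) := IsProbabilityMeasure.ae_neBot
  obtain ⟨ω, hω⟩ := h2.exists
  simp only at hω
  linarith

lemma MemTC.mono_k {k k' n : ℕ} {M : ℕ → Ω → ℝ}
    (h : MemTC 𝓕 P Q S l α k n M) (hkk' : k ≤ k') :
    MemTC 𝓕 P Q S l α k' n M := by
  obtain ⟨⟨h1, h2, h3⟩, h4⟩ := h
  exact ⟨⟨fun t ht htn => h1 t (hkk'.trans ht) htn,
    fun t ht htn => h2 t (hkk'.trans ht) htn,
    fun t ht htn => h3 t (hkk'.trans ht) htn⟩,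
    fun t ht htn => h4 t (by omega) htn⟩

/-- The trivial one-point "process" at time `n`. -/
lemma memTC_const_last {n : ℕ} {f : Ω → ℝ}
    (hf : StronglyMeasurable[𝓕 n] f) (hfi : Integrable f Q) :
    MemTC 𝓕 P Q S l α n n (fun _ => f) := by
  refine ⟨⟨fun t ht htn => ?_, fun t ht htn => hfi, fun t ht htn => absurd htn (by omega)⟩,
    fun t ht htn => absurd (ht.trans htn) (by omega)⟩
  have : t = n := le_antisymm htn ht
  subst this; exact hf

/-- Constraint comparison: increasing the random variable keeps the loss constraint. -/
lemma constraint_mono (hdec : Antitone l) {c : ℝ} (hc : ∀ x, c ≤ l x)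
    (t : ℕ) {f g : Ω → ℝ} (hg : StronglyMeasurable g)
    (hSt : StronglyMeasurable (S t))
    (hfg : ∀ ω, f ω ≤ g ω)
    (hint : Integrable (fun ω => l (f ω - S t ω)) P)
    (hcond : (P[fun ω => l (f ω - S t ω)|𝓕 (t - 1)]) ≤ᵐ[P] fun _ => α t) :
    Integrable (fun ω => l (g ω - S t ω)) P ∧
      (P[fun ω => l (g ω - S t ω)|𝓕 (t - 1)]) ≤ᵐ[P] fun _ => α t := by
  have hl : Measurable l := hdec.measurable
  have hmeas : AEStronglyMeasurable (fun ω => l (g ω - S t ω)) P :=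
    (hl.comp (hg.measurable.sub hSt.measurable)).aestronglyMeasurable
  have hle : ∀ ω, l (g ω - S t ω) ≤ l (f ω - S t ω) := by
    intro ω; exact hdec (by linarith [hfg ω])
  have hgint : Integrable (fun ω => l (g ω - S t ω)) P := by
    refine Integrable.mono' (hint.abs.add (integrable_const |c|)) hmeas ?_
    refine Filter.Eventually.of_forall fun ω => ?_
    have h1 := hle ω
    have h2 := hc (g ω - S t ω)
    have h3 := le_abs_self (l (f ω - S t ω))
    have h4 := neg_abs_le c
    rw [Real.norm_eq_abs, abs_le]
    constructor <;> simp only [Pi.add_apply] <;> linarith [abs_nonneg (l (f ω - S t ω)), abs_nonneg c]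
  exact ⟨hgint, (condExp_mono hgint hint (Filter.Eventually.of_forall hle)).trans hcond⟩

/-- Pasting two elements of `ℳ_{TC,k}` along `{N_k ≤ N'_k}` gives an element whose
time-`k` value is the pointwise minimum. -/
lemma paste_min {k n : ℕ} (hkn : k ≤ n) {N N' : ℕ → Ω → ℝ}
    (hN : MemTC 𝓕 P Q S l α k n N) (hN' : MemTC 𝓕 P Q S l α k n N') :
    ∃ N'' : ℕ → Ω → ℝ, MemTC 𝓕 P Q S l α k n N'' ∧
      ∀ ω, N'' k ω = min (N k ω) (N' k ω) := by
  obtain ⟨⟨hNm, hNi, hNs⟩, hNc⟩ := hN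
  obtain ⟨⟨hN'm, hN'i, hN's⟩, hN'c⟩ := hN'
  set A : Set Ω := {ω | N k ω ≤ N' k ω} with hA_def
  have hA : MeasurableSet[𝓕 k] A :=
    measurableSet_le (hNm k le_rfl hkn).measurable (hN'm k le_rfl hkn).measurable
  have hAc : MeasurableSet[𝓕 k] Aᶜ := hA.compl
  set N'' : ℕ → Ω → ℝ := fun t ω => A.indicator (N t) ω + Aᶜ.indicator (N' t) ω with hN''_def
  have hval : ∀ t ω, N'' t ω = if N k ω ≤ N' k ω then N t ω else N' t ω := by
    intro t ω
    by_cases h : ω ∈ A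
    · simp [N'', Set.indicator_of_mem h, Set.indicator_of_notMem (by simpa using h : ω ∉ Aᶜ),
        h.out]
    · have h' : ¬ N k ω ≤ N' k ω := h
      simp [N'', Set.indicator_of_notMem h, Set.indicator_of_mem (by simpa using h : ω ∈ Aᶜ), h']
  have hsum : ∀ t, N'' t = A.indicator (N t) + Aᶜ.indicator (N' t) := fun t => rfl
  refine ⟨N'', ⟨⟨?_, ?_, ?_⟩, ?_⟩, fun ω => by rw [hval k ω, min_def]⟩
  · intro t ht htn
    rw [hsum t]
    exact ((hNm t ht htn).indicator (𝓕.mono ht _ hA)).add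
      ((hN'm t ht htn).indicator (𝓕.mono ht _ hAc))
  · intro t ht htn
    rw [hsum t]
    exact ((hNi t ht htn).indicator ((𝓕.le k) _ hA)).add
      ((hN'i t ht htn).indicator ((𝓕.le k) _ hAc))
  · intro t ht htn
    have h1 : Q[N'' (t+1)|𝓕 t] =ᵐ[Q] Q[A.indicator (N (t+1))|𝓕 t] + Q[Aᶜ.indicator (N' (t+1))|𝓕 t] := by
      rw [hsum (t+1)]
      exact condExp_add ((hNi (t+1) (by omega) htn).indicator ((𝓕.le k) _ hA))
        ((hN'i (t+1) (by omega) htn).indicator ((𝓕.le k) _ hAc)) _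
    have h2 : Q[A.indicator (N (t+1))|𝓕 t] =ᵐ[Q] A.indicator (Q[N (t+1)|𝓕 t]) :=
      condExp_indicator (hNi (t+1) (by omega) htn) (𝓕.mono ht _ hA)
    have h3 : Q[Aᶜ.indicator (N' (t+1))|𝓕 t] =ᵐ[Q] Aᶜ.indicator (Q[N' (t+1)|𝓕 t]) :=
      condExp_indicator (hN'i (t+1) (by omega) htn) (𝓕.mono ht _ hAc)
    refine h1.trans_le ?_
    have h4 := hNs t ht htn
    have h5 := hN's t ht htn
    filter_upwards [h2, h3, h4, h5] with ω e2 e3 e4 e5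
    simp only [Pi.add_apply, e2, e3]
    by_cases h : ω ∈ A
    · simp only [Set.indicator_of_mem h, Set.indicator_of_notMem (by simpa using h : ω ∉ Aᶜ),
        add_zero, N'', zero_add]
      exact e4
    · simp only [Set.indicator_of_notMem h, Set.indicator_of_mem (by simpa using h : ω ∈ Aᶜ),
        add_zero, N'', zero_add]
      exact e5
  · intro t ht htn
    have hlsum : (fun ω => l (N'' t ω - S t ω)) =
        A.indicator (fun ω => l (N t ω - S t ω)) + Aᶜ.indicator (fun ω => l (N' t ω - S t ω)) := by
      funext ω
      by_cases h : ω ∈ A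
      · simp [hval t ω, h.out, Set.indicator_of_mem h,
          Set.indicator_of_notMem (by simpa using h : ω ∉ Aᶜ)]
      · have h' : ¬ N k ω ≤ N' k ω := h
        simp [hval t ω, h', Set.indicator_of_notMem h,
          Set.indicator_of_mem (by simpa using h : ω ∈ Aᶜ)]
    have hAm0 : MeasurableSet A := (𝓕.le k) _ hA
    have hint : Integrable (fun ω => l (N'' t ω - S t ω)) P := by
      rw [hlsum]
      exact ((hNc t ht htn).1.indicator hAm0).add ((hN'c t ht htn).1.indicator hAm0.compl)
    refine ⟨hint, ?_⟩
    have hktm : k ≤ t - 1 := by omega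
    have h1 : P[fun ω => l (N'' t ω - S t ω)|𝓕 (t-1)] =ᵐ[P]
        P[A.indicator (fun ω => l (N t ω - S t ω))|𝓕 (t-1)]
          + P[Aᶜ.indicator (fun ω => l (N' t ω - S t ω))|𝓕 (t-1)] := by
      rw [hlsum]
      exact condExp_add ((hNc t ht htn).1.indicator hAm0) ((hN'c t ht htn).1.indicator hAm0.compl) _
    have h2 := condExp_indicator (μ := P) (hNc t ht htn).1 (𝓕.mono hktm _ hA)
    have h3 := condExp_indicator (μ := P) (hN'c t ht htn).1 (𝓕.mono hktm _ hAc)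
    refine h1.trans_le ?_
    filter_upwards [h2, h3, (hNc t ht htn).2, (hN'c t ht htn).2] with ω e2 e3 e4 e5
    simp only [Pi.add_apply, e2, e3]
    by_cases h : ω ∈ A
    · simpa [Set.indicator_of_mem h, Set.indicator_of_notMem (by simpa using h : ω ∉ Aᶜ)] using e4
    · simpa [Set.indicator_of_notMem h, Set.indicator_of_mem (by simpa using h : ω ∈ Aᶜ)] using e5

lemma real_add_max_sub (a b : ℝ) : b + max (a - b) 0 = max a b := by
  rcases le_total a b with h | h
  · rw [max_eq_right (sub_nonpos.2 h), max_eq_right h, add_zero]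
  · rw [max_eq_left (sub_nonneg.2 h), max_eq_left h]; ring

/-- Extension of an element of `ℳ_{TC,k}` to an element of `ℳ_{TC,k-1}` with
time-`(k-1)` value `E^Q[max(M, N_k)|𝓕_{k-1}]`. -/
lemma extend_step (hdec : Antitone l) {c : ℝ} (hc : ∀ x, c ≤ l x)
    (hS : Adapted 𝓕 S)
    {k n : ℕ} (hk1 : 1 ≤ k) (hkn : k ≤ n) {N : ℕ → Ω → ℝ}
    (hN : MemTC 𝓕 P Q S l α k n N) {M : Ω → ℝ}
    (hMmeas : StronglyMeasurable[𝓕 k] M) (hMint : Integrable M Q)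
    (hMl : Integrable (fun ω => l (M ω - S k ω)) P)
    (hMc : (P[fun ω => l (M ω - S k ω)|𝓕 (k - 1)]) ≤ᵐ[P] fun _ => α k) :
    ∃ R : ℕ → Ω → ℝ, MemTC 𝓕 P Q S l α (k-1) n R ∧
      R (k-1) = Q[fun ω => max (M ω) (N k ω)|𝓕 (k-1)] := by
  obtain ⟨⟨hNm, hNi, hNs⟩, hNc⟩ := hN
  set mx : Ω → ℝ := fun ω => max (M ω) (N k ω) with hmx_def
  set cp : Ω → ℝ := fun ω => max (M ω - N k ω) 0 with hcp_def
  have hNkm : StronglyMeasurable[𝓕 k] (N k) := hNm k le_rfl hkn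
  have hmxm : StronglyMeasurable[𝓕 k] mx :=
    (hMmeas.measurable.max hNkm.measurable).stronglyMeasurable
  have hcpm : StronglyMeasurable[𝓕 k] cp :=
    ((hMmeas.measurable.sub hNkm.measurable).max measurable_const).stronglyMeasurable
  have hNki : Integrable (N k) Q := hNi k le_rfl hkn
  have hmxi : Integrable mx Q := by
    refine Integrable.mono' (hMint.abs.add hNki.abs)
      (hmxm.mono (𝓕.le k)).aestronglyMeasurable (Filter.Eventually.of_forall fun ω => ?_)
    rw [Real.norm_eq_abs]
    calc |mx ω| ≤ max |M ω| |N k ω| := abs_max_le_max_abs_abs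
    _ ≤ |M ω| + |N k ω| := max_le (le_add_of_nonneg_right (abs_nonneg _))
        (le_add_of_nonneg_left (abs_nonneg _))
  have hcpi : Integrable cp Q := by
    refine Integrable.mono' (hMint.abs.add hNki.abs)
      (hcpm.mono (𝓕.le k)).aestronglyMeasurable (Filter.Eventually.of_forall fun ω => ?_)
    rw [Real.norm_eq_abs]
    have h1 : |cp ω| ≤ |M ω - N k ω| := by
      rcases le_total (M ω - N k ω) 0 with h | h
      · simp [cp, max_eq_right h]
      · simp [cp, max_eq_left h]
    calc |cp ω| ≤ |M ω - N k ω| := h1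
    _ ≤ |M ω| + |N k ω| := abs_sub _ _
  set R : ℕ → Ω → ℝ := fun t => if t < k then Q[mx|𝓕 (k-1)]
    else if t = k then mx else fun ω => N t ω + cp ω with hR_def
  have hRk1 : R (k-1) = Q[mx|𝓕 (k-1)] := by simp [R, Nat.sub_lt hk1 one_pos]
  have hRk : R k = mx := by simp [R]
  have hRt : ∀ t, k < t → R t = fun ω => N t ω + cp ω := by
    intro t ht; simp [R, Nat.lt_asymm ht, Nat.ne_of_gt ht]
  refine ⟨R, ⟨⟨?_, ?_, ?_⟩, ?_⟩, hRk1⟩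
  · -- strong measurability
    intro t ht htn
    rcases lt_trichotomy t k with h | h | h
    · have ht1 : t = k - 1 := by omega
      subst ht1
      rw [hRk1]
      exact stronglyMeasurable_condExp
    · subst h; rw [hRk]; exact hmxm
    · rw [hRt t h]
      exact ((hNm t h.le htn).add (hcpm.mono (𝓕.mono h.le)) : StronglyMeasurable[𝓕 t] (N t + cp))
  · -- integrability
    intro t ht htn
    rcases lt_trichotomy t k with h | h | h
    · have ht1 : t = k - 1 := by omega
      subst ht1; rw [hRk1]; exact integrable_condExp
    · subst h; rw [hRk]; exact hmxi
    · rw [hRt t h]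
      exact (hNi t h.le htn).add hcpi
  · -- supermartingale property
    intro t ht htn
    rcases lt_trichotomy t k with h | h | h
    · have ht1 : t = k - 1 := by omega
      subst ht1
      have htk : (k - 1) + 1 = k := by omega
      rw [htk, hRk1, hRk]
    · subst h
      rw [hRk, hRt (t+1) (by omega)]
      have hsum : (fun ω => N (t+1) ω + cp ω) = N (t+1) + cp := rfl
      have h1 : Q[fun ω => N (t+1) ω + cp ω|𝓕 t] =ᵐ[Q] Q[N (t+1)|𝓕 t] + Q[cp|𝓕 t] := by
        rw [hsum]; exact condExp_add (hNi (t+1) (by omega) htn) hcpi _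
      have h2 : Q[cp|𝓕 t] = cp := condExp_of_stronglyMeasurable (𝓕.le t) hcpm hcpi
      refine h1.trans_le ?_
      filter_upwards [hNs t le_rfl htn] with ω e1
      simp only [Pi.add_apply, h2]
      have e2 : N t ω + cp ω = mx ω := real_add_max_sub (M ω) (N t ω)
      linarith
    · rw [hRt t h, hRt (t+1) (by omega)]
      have hsum : (fun ω => N (t+1) ω + cp ω) = N (t+1) + cp := rfl
      have h1 : Q[fun ω => N (t+1) ω + cp ω|𝓕 t] =ᵐ[Q] Q[N (t+1)|𝓕 t] + Q[cp|𝓕 t] := by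
        rw [hsum]; exact condExp_add (hNi (t+1) (by omega) htn) hcpi _
      have h2 : Q[cp|𝓕 t] = cp :=
        condExp_of_stronglyMeasurable (𝓕.le t) (hcpm.mono (𝓕.mono h.le)) hcpi
      refine h1.trans_le ?_
      filter_upwards [hNs t h.le htn] with ω e1
      simp only [Pi.add_apply, h2]
      linarith
  · -- loss constraints
    intro t ht htn
    have ht' : k ≤ t := by omega
    rcases eq_or_lt_of_le ht' with h | h
    · subst h
      rw [hRk]
      exact constraint_mono hdec hc k (hmxm.mono (𝓕.le k)) ((hS k).mono (𝓕.le k) le_rfl).stronglyMeasurable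
        (fun ω => le_max_left _ _) hMl hMc
    · rw [hRt t h]
      exact constraint_mono hdec hc t
        (((hNm t h.le htn).add (hcpm.mono (𝓕.mono h.le))).mono (𝓕.le t) :
          StronglyMeasurable (N t + cp))
        ((hS t).mono (𝓕.le t) le_rfl).stronglyMeasurable
        (fun ω => le_add_of_nonneg_right (le_max_right _ _))
        (hNc t (by omega) htn).1 (hNc t (by omega) htn).2

end Helpers
open scoped Topology

/-- Iterated binary combination along a sequence. -/
def chainRec {β : Sort*} (f : β → β → β) (g : ℕ → β) : ℕ → β
  | 0 => g 0
  | j + 1 => f (chainRec f g j) (g (j + 1))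

section Chain
set_option linter.unusedSectionVars false

variable {Ω : Type*} {m0 : MeasurableSpace Ω} {P Q : Measure Ω}
  [IsProbabilityMeasure P] [IsProbabilityMeasure Q]
  {𝓕 : Filtration ℕ m0} {S : ℕ → Ω → ℝ} {l : ℝ → ℝ} {α : ℕ → ℝ}

lemma exists_chain {k n : ℕ} (hkn : k ≤ n) (Nseq : ℕ → ℕ → Ω → ℝ)
    (hNseq : ∀ j, MemTC 𝓕 P Q S l α k n (Nseq j)) :
    ∃ K : ℕ → ℕ → Ω → ℝ, (∀ j, MemTC 𝓕 P Q S l α k n (K j)) ∧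
      (∀ j ω, K (j+1) k ω ≤ K j k ω) ∧ (∀ j ω, K j k ω ≤ Nseq j k ω) := by
  classical
  let step : {N : ℕ → Ω → ℝ // MemTC 𝓕 P Q S l α k n N} →
      {N : ℕ → Ω → ℝ // MemTC 𝓕 P Q S l α k n N} →
      {N : ℕ → Ω → ℝ // MemTC 𝓕 P Q S l α k n N} := fun a b =>
    ⟨Classical.choose (paste_min hkn a.2 b.2), (Classical.choose_spec (paste_min hkn a.2 b.2)).1⟩
  have hstep : ∀ a b, ∀ ω, (step a b).1 k ω = min (a.1 k ω) (b.1 k ω) := fun a b =>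
    (Classical.choose_spec (paste_min hkn a.2 b.2)).2
  let Kc : ℕ → {N : ℕ → Ω → ℝ // MemTC 𝓕 P Q S l α k n N} :=
    chainRec step (fun j => ⟨Nseq j, hNseq j⟩)
  have hKc : ∀ j, Kc (j+1) = step (Kc j) ⟨Nseq (j+1), hNseq (j+1)⟩ := fun j => rfl
  refine ⟨fun j => (Kc j).1, fun j => (Kc j).2, fun j ω => ?_, fun j ω => ?_⟩
  · show (Kc (j+1)).1 k ω ≤ (Kc j).1 k ω
    rw [hKc j, hstep (Kc j) ⟨Nseq (j+1), hNseq (j+1)⟩ ω]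
    exact min_le_left _ _
  · cases j with
    | zero => exact le_rfl
    | succ j =>
      show (Kc (j+1)).1 k ω ≤ Nseq (j+1) k ω
      rw [hKc j, hstep (Kc j) ⟨Nseq (j+1), hNseq (j+1)⟩ ω]
      exact min_le_right _ _

lemma arctan_integrable {g : Ω → ℝ} (hg : AEMeasurable g P) :
    Integrable (fun ω => Real.arctan (g ω)) P := by
  refine Integrable.mono' (integrable_const (Real.pi / 2))
    ((Real.continuous_arctan.measurable.comp_aemeasurable hg).aestronglyMeasurable)
    (Filter.Eventually.of_forall fun ω => ?_)
  rw [Real.norm_eq_abs, abs_le]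
  exact ⟨(Real.neg_pi_div_two_lt_arctan _).le, (Real.arctan_lt_pi_div_two _).le⟩

/-- From the essential-infimum property, produce a pointwise decreasing sequence in
`ℳ_{TC,k}` whose time-`k` values converge a.e. to `V`. -/
lemma exists_approx_seq {k n : ℕ} (hkn : k ≤ n) {V : Ω → ℝ}
    (hne : ∃ N, MemTC 𝓕 P Q S l α k n N)
    (hEI : IsEssInf P {f : Ω → ℝ | ∃ N : ℕ → Ω → ℝ,
      MemTC 𝓕 P Q S l α k n N ∧ f = N k} V) :
    ∃ K : ℕ → ℕ → Ω → ℝ, (∀ j, MemTC 𝓕 P Q S l α k n (K j)) ∧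
      (∀ j ω, K (j+1) k ω ≤ K j k ω) ∧
      (∀ᵐ ω ∂P, (∀ j, V ω ≤ K j k ω) ∧
        Filter.Tendsto (fun j => K j k ω) atTop (𝓝 (V ω))) := by
  classical
  set ℳ : Set (ℕ → Ω → ℝ) := {N | MemTC 𝓕 P Q S l α k n N} with hℳ
  have hmeasNk : ∀ N ∈ ℳ, AEMeasurable (N k) P := fun N hN =>
    ((hN.1.1 k le_rfl hkn).mono (𝓕.le k)).measurable.aemeasurable
  have hint : ∀ N ∈ ℳ, Integrable (fun ω => Real.arctan (N k ω)) P := fun N hN =>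
    arctan_integrable (hmeasNk N hN)
  set T : Set ℝ := (fun N : ℕ → Ω → ℝ => ∫ ω, Real.arctan (N k ω) ∂P) '' ℳ with hT
  have hTne : T.Nonempty := ⟨_, hne.choose, hne.choose_spec, rfl⟩
  have hTbdd : BddBelow T := by
    refine ⟨-(Real.pi / 2), ?_⟩
    rintro x ⟨N, hN, rfl⟩
    calc -(Real.pi / 2) = ∫ _, -(Real.pi / 2) ∂P := by simp
    _ ≤ ∫ ω, Real.arctan (N k ω) ∂P := integral_mono (integrable_const _) (hint N hN)
        fun ω => (Real.neg_pi_div_two_lt_arctan _).le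
  set β := sInf T with hβ
  have hseq : ∀ j : ℕ, ∃ N, N ∈ ℳ ∧ ∫ ω, Real.arctan (N k ω) ∂P < β + 1/(j+1) := by
    intro j
    have h1 : β < β + 1/(j+1) := lt_add_of_pos_right β (by positivity)
    obtain ⟨x, ⟨N, hN, rfl⟩, hx⟩ := exists_lt_of_csInf_lt hTne h1
    exact ⟨N, hN, hx⟩
  choose Nseq hNmem hNlt using hseq
  obtain ⟨K, hK, hKdec, hKle⟩ := exists_chain hkn Nseq hNmem
  have hVle : ∀ j, V ≤ᵐ[P] K j k := fun j => hEI.1 _ ⟨K j, hK j, rfl⟩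
  -- the pointwise limit
  set g : Ω → ℝ := fun ω => ⨅ j, K j k ω with hg
  have hae : ∀ᵐ ω ∂P, ∀ j, V ω ≤ K j k ω := ae_all_iff.2 hVle
  have htend : ∀ᵐ ω ∂P, Filter.Tendsto (fun j => K j k ω) atTop (𝓝 (g ω)) := by
    filter_upwards [hae] with ω hω
    exact tendsto_atTop_ciInf (antitone_nat_of_succ_le fun j => hKdec j ω)
      ⟨V ω, by rintro x ⟨j, rfl⟩; exact hω j⟩
  have hgmeas : AEMeasurable g P :=
    aemeasurable_of_tendsto_metrizable_ae atTop (fun j => hmeasNk (K j) (hK j)) htend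
  -- integrals of arctan of K j k converge to β
  have hKint : ∀ j, Integrable (fun ω => Real.arctan (K j k ω)) P := fun j => hint _ (hK j)
  have hβle : ∀ j, β ≤ ∫ ω, Real.arctan (K j k ω) ∂P := fun j => csInf_le hTbdd ⟨K j, hK j, rfl⟩
  have hlt : ∀ j, ∫ ω, Real.arctan (K j k ω) ∂P < β + 1/(j+1) := by
    intro j
    have hmono : ∫ ω, Real.arctan (K j k ω) ∂P ≤ ∫ ω, Real.arctan (Nseq j k ω) ∂P :=
      integral_mono (hKint j) (hint _ (hNmem j))
        (fun ω => Real.arctan_strictMono.monotone (hKle j ω))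
    exact lt_of_le_of_lt hmono (hNlt j)
  have htendβ : Filter.Tendsto (fun j : ℕ => ∫ ω, Real.arctan (K j k ω) ∂P) atTop (𝓝 β) := by
    have h1 : Filter.Tendsto (fun j : ℕ => β + 1/(j+1 : ℝ)) atTop (𝓝 β) := by
      have := tendsto_one_div_add_atTop_nhds_zero_nat (𝕜 := ℝ)
      have h2 := Filter.Tendsto.add (tendsto_const_nhds (x := β) (f := atTop (α := ℕ))) this
      simpa using h2
    refine tendsto_of_tendsto_of_tendsto_of_le_of_le tendsto_const_nhds h1 hβle fun j => ?_
    · exact (hlt j).le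
  have htendg : Filter.Tendsto (fun j : ℕ => ∫ ω, Real.arctan (K j k ω) ∂P) atTop
      (𝓝 (∫ ω, Real.arctan (g ω) ∂P)) := by
    refine tendsto_integral_of_dominated_convergence (fun _ => Real.pi / 2)
      (fun j => (hKint j).1) (integrable_const _) (fun j => Filter.Eventually.of_forall fun ω => ?_)
      ?_
    · rw [Real.norm_eq_abs, abs_le]
      exact ⟨(Real.neg_pi_div_two_lt_arctan _).le, (Real.arctan_lt_pi_div_two _).le⟩
    · filter_upwards [htend] with ω hω
      exact (Real.continuous_arctan.tendsto _).comp hω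
  have hgβ : ∫ ω, Real.arctan (g ω) ∂P = β := tendsto_nhds_unique htendg htendβ
  -- g is an a.e. lower bound for the family
  have hglb : ∀ N ∈ ℳ, g ≤ᵐ[P] N k := by
    intro N hN
    have hmin : ∀ j, ∃ Pp, Pp ∈ ℳ ∧ ∀ ω, Pp k ω = min (K j k ω) (N k ω) := by
      intro j
      obtain ⟨Pp, h1, h2⟩ := paste_min hkn (hK j) hN
      exact ⟨Pp, h1, h2⟩
    have hβmin : ∀ j, β ≤ ∫ ω, Real.arctan (min (K j k ω) (N k ω)) ∂P := by
      intro j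
      obtain ⟨Pp, h1, h2⟩ := hmin j
      have : (fun ω => Real.arctan (min (K j k ω) (N k ω))) = fun ω => Real.arctan (Pp k ω) := by
        funext ω; rw [h2 ω]
      rw [this]
      exact csInf_le hTbdd ⟨Pp, h1, rfl⟩
    have hmint : Integrable (fun ω => Real.arctan (min (g ω) (N k ω))) P :=
      arctan_integrable (hgmeas.min (hmeasNk N hN))
    have htendmin : Filter.Tendsto (fun j : ℕ => ∫ ω, Real.arctan (min (K j k ω) (N k ω)) ∂P)
        atTop (𝓝 (∫ ω, Real.arctan (min (g ω) (N k ω)) ∂P)) := by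
      refine tendsto_integral_of_dominated_convergence (fun _ => Real.pi / 2)
        (fun j => (arctan_integrable ((hmeasNk (K j) (hK j)).min (hmeasNk N hN))).1)
        (integrable_const _) (fun j => Filter.Eventually.of_forall fun ω => ?_) ?_
      · rw [Real.norm_eq_abs, abs_le]
        exact ⟨(Real.neg_pi_div_two_lt_arctan _).le, (Real.arctan_lt_pi_div_two _).le⟩
      · filter_upwards [htend] with ω hω
        exact (Real.continuous_arctan.tendsto _).comp (hω.min tendsto_const_nhds)
    have hβlim : β ≤ ∫ ω, Real.arctan (min (g ω) (N k ω)) ∂P := ge_of_tendsto' htendmin hβmin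
    -- the difference has nonpositive integral and nonneg integrand
    have hdiffint : Integrable (fun ω => Real.arctan (g ω) - Real.arctan (min (g ω) (N k ω))) P :=
      (arctan_integrable hgmeas).sub hmint
    have hnonneg : ∀ ω, 0 ≤ Real.arctan (g ω) - Real.arctan (min (g ω) (N k ω)) := fun ω =>
      sub_nonneg.2 (Real.arctan_strictMono.monotone (min_le_left _ _))
    have hintle : ∫ ω, (Real.arctan (g ω) - Real.arctan (min (g ω) (N k ω))) ∂P ≤ 0 := by
      rw [integral_sub (arctan_integrable hgmeas) hmint, hgβ]
      linarith
    have hzero : ∫ ω, (Real.arctan (g ω) - Real.arctan (min (g ω) (N k ω))) ∂P = 0 :=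
      le_antisymm hintle (integral_nonneg hnonneg)
    have := (integral_eq_zero_iff_of_nonneg_ae (Filter.Eventually.of_forall hnonneg) hdiffint).1 hzero
    filter_upwards [this] with ω hω
    have h1 : Real.arctan (g ω) = Real.arctan (min (g ω) (N k ω)) := by
      have := hω
      simp only [Pi.zero_apply] at this
      linarith [this]
    have h2 : g ω = min (g ω) (N k ω) := Real.arctan_injective h1
    rw [h2]
    exact min_le_right _ _
  -- g ≤ V a.e. by maximality, V ≤ g a.e. from the lower bounds
  have hgV : g ≤ᵐ[P] V := by
    refine hEI.2 g ?_
    rintro f ⟨N, hN, rfl⟩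
    exact hglb N hN
  refine ⟨K, hK, hKdec, ?_⟩
  filter_upwards [hae, htend, hgV] with ω h1 h2 h3
  have hVg : V ω ≤ g ω := le_ciInf fun j => h1 j
  have hgv : g ω = V ω := le_antisymm h3 hVg
  exact ⟨h1, hgv ▸ h2⟩
end Chain

section Main
set_option linter.unusedSectionVars false
open scoped Topology

variable {Ω : Type*} {m0 : MeasurableSpace Ω} {P Q : Measure Ω}
  [IsProbabilityMeasure P] [IsProbabilityMeasure Q]
  {𝓕 : Filtration ℕ m0} {S : ℕ → Ω → ℝ} {l : ℝ → ℝ} {α : ℕ → ℝ}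

lemma base_case (hPQ : P ≪ Q) (hdec : Antitone l) {c : ℝ} (hc : ∀ x, c ≤ l x)
    (hS : Adapted 𝓕 S) {n : ℕ} (hn : 1 ≤ n) {V : ℕ → Ω → ℝ}
    (hVlast : IsEssInf P {f : Ω → ℝ | ∃ M : Ω → ℝ,
        StronglyMeasurable[𝓕 n] M ∧ Integrable M Q ∧
        Integrable (fun ω => l (M ω - S n ω)) P ∧
        ((P[fun ω => l (M ω - S n ω)|𝓕 (n - 1)]) ≤ᵐ[P] fun _ => α n) ∧
        f = Q[M|𝓕 (n - 1)]} (V (n - 1))) :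
    (∃ N, MemTC 𝓕 P Q S l α (n-1) n N) ∧
      IsEssInf P {f : Ω → ℝ | ∃ M : ℕ → Ω → ℝ,
        MemTC 𝓕 P Q S l α (n-1) n M ∧ f = M (n-1)} (V (n-1)) := by
  obtain ⟨f0, M0, hM0m, hM0i, hM0l, hM0c, hf0⟩ := isEssInf_nonempty hVlast
  have hNtriv : MemTC 𝓕 P Q S l α n n (fun _ => M0) := memTC_const_last hM0m hM0i
  obtain ⟨R0, hR0, _⟩ := extend_step hdec hc hS hn le_rfl hNtriv hM0m hM0i hM0l hM0c
  refine ⟨⟨R0, hR0⟩, ?_, ?_⟩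
  · rintro f ⟨M, hM, rfl⟩
    have hn1 : n - 1 + 1 = n := by omega
    have hc1 := hM.2 n (by omega) le_rfl
    have h1 : V (n-1) ≤ᵐ[P] Q[M n|𝓕 (n - 1)] :=
      hVlast.1 _ ⟨M n, hM.1.1 n (by omega) le_rfl, hM.1.2.1 n (by omega) le_rfl,
        hc1.1, hc1.2, rfl⟩
    have h2 := hM.1.2.2 (n-1) le_rfl (by omega)
    rw [hn1] at h2
    exact h1.trans (hPQ.ae_le h2)
  · intro W' hW'
    refine hVlast.2 W' ?_
    rintro f ⟨M, hMm, hMi, hMl, hMc, rfl⟩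
    have htriv : MemTC 𝓕 P Q S l α n n (fun _ => M) := memTC_const_last hMm hMi
    obtain ⟨R, hR, hRval⟩ := extend_step hdec hc hS hn le_rfl htriv hMm hMi hMl hMc
    have hmm : (fun ω => max (M ω) (M ω)) = M := funext fun ω => max_self _
    rw [hmm] at hRval
    have h := hW' _ ⟨R, hR, rfl⟩
    rwa [hRval] at h

lemma step_case (hPQ : P ≪ Q) (hQP : Q ≪ P) (hdec : Antitone l) {c : ℝ} (hc : ∀ x, c ≤ l x)
    (hS : Adapted 𝓕 S) {n k : ℕ} (hk1 : 1 ≤ k) (hkn : k ≤ n - 1) (hn : 1 ≤ n)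
    {V : ℕ → Ω → ℝ}
    (hVrec : IsEssInf P {f : Ω → ℝ | ∃ M : Ω → ℝ,
        StronglyMeasurable[𝓕 k] M ∧ Integrable M Q ∧
        (V k ≤ᵐ[P] M) ∧
        Integrable (fun ω => l (M ω - S k ω)) P ∧
        ((P[fun ω => l (M ω - S k ω)|𝓕 (k - 1)]) ≤ᵐ[P] fun _ => α k) ∧
        f = Q[M|𝓕 (k - 1)]} (V (k - 1)))
    (ihne : ∃ N, MemTC 𝓕 P Q S l α k n N)
    (ih : IsEssInf P {f : Ω → ℝ | ∃ M : ℕ → Ω → ℝ,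
        MemTC 𝓕 P Q S l α k n M ∧ f = M k} (V k)) :
    (∃ N, MemTC 𝓕 P Q S l α (k-1) n N) ∧
      IsEssInf P {f : Ω → ℝ | ∃ M : ℕ → Ω → ℝ,
        MemTC 𝓕 P Q S l α (k-1) n M ∧ f = M (k-1)} (V (k-1)) := by
  have hknn : k ≤ n := by omega
  constructor
  · obtain ⟨f0, M0, hM0m, hM0i, _, hM0l, hM0c⟩ := isEssInf_nonempty hVrec
    obtain ⟨N0, hN0⟩ := ihne
    obtain ⟨R0, hR0, _⟩ := extend_step hdec hc hS hk1 hknn hN0 hM0m hM0i hM0l hM0c.1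
    exact ⟨R0, hR0⟩
  refine ⟨?_, ?_⟩
  · -- lower bound
    rintro f ⟨M, hM, rfl⟩
    have hMk : MemTC 𝓕 P Q S l α k n M := hM.mono_k (by omega)
    have hVkM : V k ≤ᵐ[P] M k := ih.1 _ ⟨M, hMk, rfl⟩
    have hc1 := hM.2 k (by omega) hknn
    have h1 : V (k-1) ≤ᵐ[P] Q[M k|𝓕 (k - 1)] :=
      hVrec.1 _ ⟨M k, hM.1.1 k (by omega) hknn, hM.1.2.1 k (by omega) hknn,
        hVkM, hc1.1, hc1.2, rfl⟩
    have h2 := hM.1.2.2 (k-1) le_rfl (by omega)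
    rw [show k - 1 + 1 = k by omega] at h2
    exact h1.trans (hPQ.ae_le h2)
  · -- maximality
    intro W' hW'
    refine hVrec.2 W' ?_
    rintro f ⟨M, hMm, hMi, hVM, hMl, hMc, rfl⟩
    obtain ⟨K, hK, hKdec, hKae⟩ := exists_approx_seq hknn ihne ih
    have hK0 : ∀ j ω, K j k ω ≤ K 0 k ω := by
      intro j ω
      induction j with
      | zero => exact le_rfl
      | succ j ihj => exact (hKdec j ω).trans ihj
    have hRj : ∀ j, ∃ R, MemTC 𝓕 P Q S l α (k-1) n R ∧
        R (k-1) = Q[fun ω => max (M ω) (K j k ω)|𝓕 (k - 1)] :=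
      fun j => extend_step hdec hc hS hk1 hknn (hK j) hMm hMi hMl hMc
    choose R hRmem hRval using hRj
    set mxj : ℕ → Ω → ℝ := fun j ω => max (M ω) (K j k ω) with hmxj
    have hKint : ∀ j, Integrable (K j k) Q := fun j => (hK j).1.2.1 k le_rfl hknn
    have hKm : ∀ j, StronglyMeasurable (K j k) := fun j => ((hK j).1.1 k le_rfl hknn).mono (𝓕.le k)
    have hMm0 : StronglyMeasurable M := hMm.mono (𝓕.le k)
    have hmxm : ∀ j, StronglyMeasurable (mxj j) := fun j =>
      (hMm0.measurable.max (hKm j).measurable).stronglyMeasurable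
    have hmxint : ∀ j, Integrable (mxj j) Q := by
      intro j
      refine Integrable.mono' (hMi.abs.add (hKint j).abs) (hmxm j).aestronglyMeasurable
        (Filter.Eventually.of_forall fun ω => ?_)
      rw [Real.norm_eq_abs]
      have h1 : |mxj j ω| ≤ max |M ω| |K j k ω| := abs_max_le_max_abs_abs
      have := le_abs_self (M ω); have := le_abs_self (K j k ω)
      have := abs_nonneg (M ω); have := abs_nonneg (K j k ω)
      simp only [Pi.add_apply]
      rcases max_cases |M ω| |K j k ω| with ⟨he, _⟩ | ⟨he, _⟩ <;> rw [he] at h1 <;> linarith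
    set gj : ℕ → Ω → ℝ := fun j => Q[mxj j|𝓕 (k - 1)] with hgj
    set h : Ω → ℝ := Q[M|𝓕 (k - 1)] with hh
    have hW'j : ∀ j, W' ≤ᵐ[P] gj j := by
      intro j
      have h1 := hW' _ ⟨R j, hRmem j, rfl⟩
      rwa [hRval j] at h1
    have hhle : ∀ j, h ≤ᵐ[Q] gj j := fun j =>
      condExp_mono hMi (hmxint j) (Filter.Eventually.of_forall fun ω => le_max_left _ _)
    have hgdec : ∀ j, gj (j+1) ≤ᵐ[Q] gj j := fun j =>
      condExp_mono (hmxint (j+1)) (hmxint j)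
        (Filter.Eventually.of_forall fun ω => max_le_max le_rfl (hKdec j ω))
    -- convergence of integrals
    have haeQtend : ∀ᵐ ω ∂Q, Filter.Tendsto (fun j => mxj j ω) atTop (𝓝 (M ω)) := by
      have h1 : ∀ᵐ ω ∂P, (Filter.Tendsto (fun j => K j k ω) atTop (𝓝 (V k ω)) ∧ V k ω ≤ M ω) := by
        filter_upwards [hKae, hVM] with ω e1 e2
        exact ⟨e1.2, e2⟩
      filter_upwards [hQP.ae_le h1] with ω e1
      have h2 : Filter.Tendsto (fun j => mxj j ω) atTop (𝓝 (max (M ω) (V k ω))) :=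
        Filter.Tendsto.max tendsto_const_nhds e1.1
      rwa [max_eq_left e1.2] at h2
    have htendQ : Filter.Tendsto (fun j => ∫ ω, mxj j ω ∂Q) atTop (𝓝 (∫ ω, M ω ∂Q)) := by
      refine tendsto_integral_of_dominated_convergence (fun ω => |M ω| + |mxj 0 ω|)
        (fun j => (hmxm j).aestronglyMeasurable) (hMi.abs.add ((hmxint 0).abs))
        (fun j => Filter.Eventually.of_forall fun ω => ?_) haeQtend
      rw [Real.norm_eq_abs, abs_le]
      have h1 : M ω ≤ mxj j ω := le_max_left _ _
      have h2 : mxj j ω ≤ mxj 0 ω := max_le_max le_rfl (hK0 j ω)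
      have := neg_abs_le (M ω); have := le_abs_self (mxj 0 ω)
      have := abs_nonneg (M ω); have := abs_nonneg (mxj 0 ω)
      constructor <;> linarith
    -- the pointwise infimum of the conditional expectations
    set G : Ω → ℝ := fun ω => ⨅ j, gj j ω with hG
    have haeQ : ∀ᵐ ω ∂Q, (∀ j, h ω ≤ gj j ω) ∧ ∀ j, gj (j+1) ω ≤ gj j ω :=
      (ae_all_iff.2 hhle).and (ae_all_iff.2 hgdec)
    have htendG : ∀ᵐ ω ∂Q, Filter.Tendsto (fun j => gj j ω) atTop (𝓝 (G ω)) := by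
      filter_upwards [haeQ] with ω e1
      exact tendsto_atTop_ciInf (antitone_nat_of_succ_le fun j => e1.2 j)
        ⟨h ω, by rintro x ⟨j, rfl⟩; exact e1.1 j⟩
    have hGmeas : AEMeasurable G Q :=
      aemeasurable_of_tendsto_metrizable_ae atTop
        (fun j => (stronglyMeasurable_condExp.mono (𝓕.le (k-1))).measurable.aemeasurable) htendG
    have hGle : ∀ j, G ≤ᵐ[Q] gj j := by
      intro j
      filter_upwards [haeQ] with ω e1
      exact ciInf_le ⟨h ω, by rintro x ⟨i, rfl⟩; exact e1.1 i⟩ j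
    have hhG : h ≤ᵐ[Q] G := by
      filter_upwards [haeQ] with ω e1
      exact le_ciInf fun j => e1.1 j
    have hGint : Integrable G Q := by
      refine Integrable.mono' (integrable_condExp.abs.add integrable_condExp.abs
        : Integrable (fun ω => |h ω| + |gj 0 ω|) Q) hGmeas.aestronglyMeasurable ?_
      filter_upwards [hGle 0, hhG] with ω e1 e2
      rw [Real.norm_eq_abs, abs_le]
      have := neg_abs_le (h ω); have := le_abs_self (gj 0 ω)
      have := abs_nonneg (h ω); have := abs_nonneg (gj 0 ω)
      have e3 : (Q[M|𝓕 (k - 1)]) ω = h ω := rfl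
      constructor <;> simp only [Pi.add_apply] <;> linarith
    have hinteq : ∀ j, ∫ ω, gj j ω ∂Q = ∫ ω, mxj j ω ∂Q := fun j =>
      integral_condExp (𝓕.le (k-1))
    have hinteqh : ∫ ω, h ω ∂Q = ∫ ω, M ω ∂Q := integral_condExp (𝓕.le (k-1))
    have hdiffle : ∀ j, ∫ ω, (G ω - h ω) ∂Q ≤ (∫ ω, mxj j ω ∂Q) - ∫ ω, M ω ∂Q := by
      intro j
      rw [integral_sub hGint integrable_condExp, ← hinteq j, ← hinteqh]
      have h1 : ∫ ω, G ω ∂Q ≤ ∫ ω, gj j ω ∂Q := integral_mono_ae hGint integrable_condExp (hGle j)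
      linarith
    have htend0 : Filter.Tendsto (fun j => (∫ ω, mxj j ω ∂Q) - ∫ ω, M ω ∂Q) atTop (𝓝 0) := by
      have := htendQ.sub (tendsto_const_nhds (x := ∫ ω, M ω ∂Q) (f := atTop (α := ℕ)))
      simpa using this
    have hle0 : ∫ ω, (G ω - h ω) ∂Q ≤ 0 :=
      ge_of_tendsto htend0 (Filter.Eventually.of_forall hdiffle)
    have hge0 : 0 ≤ ∫ ω, (G ω - h ω) ∂Q :=
      integral_nonneg_of_ae (hhG.mono fun ω hω => sub_nonneg.2 hω)
    have hzero : (fun ω => G ω - h ω) =ᵐ[Q] 0 :=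
      (integral_eq_zero_iff_of_nonneg_ae (hhG.mono fun ω hω => sub_nonneg.2 hω)
        (hGint.sub integrable_condExp)).1 (le_antisymm hle0 hge0)
    have hGh : G =ᵐ[Q] h := by
      filter_upwards [hzero] with ω e1
      simp only [Pi.zero_apply] at e1
      linarith
    -- conclude
    have hW'G : W' ≤ᵐ[P] G := by
      filter_upwards [ae_all_iff.2 hW'j, hPQ.ae_le (ae_all_iff.2 hhle)] with ω e1 e2
      exact le_ciInf fun j => e1 j
    calc W' ≤ᵐ[P] G := hW'G
    _ =ᵐ[P] h := hPQ.ae_le hGh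

end Main

/-- Proposition 3.5 (dynamic programming for the time-consistent constraint): if
`(V_k)` satisfies the backward recursion (3.2), then `V_k` is an essential infimum
of `{ M_k : (M_t)_{t=k}^n ∈ ℳ_{TC,k} }` for every `k ∈ {0,…,n-1}`. -/
theorem stmt_8
    {Ω : Type*} {m0 : MeasurableSpace Ω} (P Q : Measure Ω)
    [IsProbabilityMeasure P] [IsProbabilityMeasure Q]
    (hPQ : P ≪ Q) (hQP : Q ≪ P)
    (𝓕 : Filtration ℕ m0) (n : ℕ) (hn : 1 ≤ n)
    (l : ℝ → ℝ) (hconv : ConvexOn ℝ Set.univ l) (hdec : Antitone l)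
    (hbdd : ∃ c : ℝ, ∀ x : ℝ, c ≤ l x)
    (S : ℕ → Ω → ℝ) (hS : Adapted 𝓕 S) (hSint : ∀ t, Integrable (S t) Q)
    (α : ℕ → ℝ)
    (V : ℕ → Ω → ℝ) (hVmeas : ∀ k, k ≤ n - 1 → StronglyMeasurable[𝓕 k] (V k))
    (hVlast : IsEssInf P {f : Ω → ℝ | ∃ M : Ω → ℝ,
        StronglyMeasurable[𝓕 n] M ∧ Integrable M Q ∧
        Integrable (fun ω => l (M ω - S n ω)) P ∧
        ((P[fun ω => l (M ω - S n ω)|𝓕 (n - 1)]) ≤ᵐ[P] fun _ => α n) ∧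
        f = Q[M|𝓕 (n - 1)]} (V (n - 1)))
    (hVrec : ∀ k, 1 ≤ k → k ≤ n - 1 →
      IsEssInf P {f : Ω → ℝ | ∃ M : Ω → ℝ,
        StronglyMeasurable[𝓕 k] M ∧ Integrable M Q ∧
        (V k ≤ᵐ[P] M) ∧
        Integrable (fun ω => l (M ω - S k ω)) P ∧
        ((P[fun ω => l (M ω - S k ω)|𝓕 (k - 1)]) ≤ᵐ[P] fun _ => α k) ∧
        f = Q[M|𝓕 (k - 1)]} (V (k - 1))) :
    ∀ k, k ≤ n - 1 →
      IsEssInf P {f : Ω → ℝ | ∃ M : ℕ → Ω → ℝ,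
        MemTC 𝓕 P Q S l α k n M ∧ f = M k} (V k) := by
  obtain ⟨c, hc⟩ := hbdd
  have key : ∀ j : ℕ, j ≤ n - 1 →
      (∃ N, MemTC 𝓕 P Q S l α (n-1-j) n N) ∧
      IsEssInf P {f : Ω → ℝ | ∃ M : ℕ → Ω → ℝ,
        MemTC 𝓕 P Q S l α (n-1-j) n M ∧ f = M (n-1-j)} (V (n-1-j)) := by
    intro j
    induction j with
    | zero =>
      intro _
      simpa using base_case hPQ hdec hc hS hn hVlast
    | succ j ihj =>
      intro hj
      have hj' : j ≤ n - 1 := by omega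
      have h1 := ihj hj'
      have hk1 : 1 ≤ n - 1 - j := by omega
      have hkn : n - 1 - j ≤ n - 1 := by omega
      have hkeq : n - 1 - (j+1) = (n - 1 - j) - 1 := by omega
      rw [hkeq]
      exact step_case hPQ hQP hdec hc hS hk1 hkn hn (hVrec _ hk1 hkn) h1.1 h1.2
  intro k hk
  have h := (key (n-1-k) (by omega)).2
  rwa [show n - 1 - (n-1-k) = k by omega] at h
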